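/- Let G=(V,E) be a mixed graph and A, B, C disjoint subsets of V with M = an(A∪B∪C). Then A ⊥_m B | C in G_M if and only if A* ⊥_m B* | C in G_M, where A* is the set of all vertices v ∈ M\(B∪C) that are connected to A by some path in G_M not intersecting C in the undirected graph obtained by augmenting G_M (adding an undirected edge between any two vertices connected by a pure-collider path with all intermediate vertices in C, then ignoring edge orientations), and B* = M\(C ∪ A*). -/

import Mathlib

structure MixedGraph (V : Type*) where
  dir : V → V → Prop
  bi : V → V → Prop
  bi_symm : ∀ {a b : V}, bi a b → bi b a

namespace MixedGraph

variable {V : Type*}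

/-- A single edge traversal: a directed edge traversed forwards (`a → b`),
a directed edge traversed backwards (`a ← b`), or a bi-directed edge (`a ↔ b`). -/
inductive Step (G : MixedGraph V) : V → V → Type _
  | fwd {a b : V} : G.dir a b → G.Step a b
  | bwd {a b : V} : G.dir b a → G.Step a b
  | bi  {a b : V} : G.bi a b → G.Step a b

/-- The edge has an arrowhead at its second endpoint. -/
def Step.arrowAtEnd {G : MixedGraph V} : {a b : V} → G.Step a b → Prop
  | _, _, .fwd _ => True
  | _, _, .bwd _ => False
  | _, _, .bi _ => True

/-- The edge has an arrowhead at its first endpoint. -/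
def Step.arrowAtStart {G : MixedGraph V} : {a b : V} → G.Step a b → Prop
  | _, _, .fwd _ => False
  | _, _, .bwd _ => True
  | _, _, .bi _ => True

/-- Paths (possibly self-intersecting) in a mixed graph. -/
inductive Walk (G : MixedGraph V) : V → V → Type _
  | nil {a : V} : G.Walk a a
  | cons {a b c : V} : G.Step a b → G.Walk b c → G.Walk a c

namespace Walk

variable {G : MixedGraph V}

def length : {a b : V} → G.Walk a b → ℕ
  | _, _, .nil => 0
  | _, _, .cons _ w => w.length + 1

def verts : {a b : V} → G.Walk a b → List V
  | a, _, .nil => [a]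
  | a, _, .cons _ w => a :: w.verts

/-- The intermediate vertices of a walk. -/
def interm {a b : V} (w : G.Walk a b) : List V := w.verts.tail.dropLast

def append : {a b c : V} → G.Walk a b → G.Walk b c → G.Walk a c
  | _, _, _, .nil, w' => w'
  | _, _, _, .cons s w, w' => .cons s (w.append w')

/-- Every intermediate vertex of the walk is a collider. -/
def IsPureCollider : {a b : V} → G.Walk a b → Prop
  | _, _, .nil => True
  | _, _, .cons _ .nil => True
  | _, _, .cons s (.cons t w) =>
      s.arrowAtEnd ∧ t.arrowAtStart ∧ (Walk.cons t w).IsPureCollider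

/-- The walk is m-connecting given `C`: every non-collider on it is outside `C`
and every collider on it is in `C`. -/
def IsMConnecting (C : Set V) : {a b : V} → G.Walk a b → Prop
  | _, _, .nil => True
  | _, _, .cons _ .nil => True
  | _, _, .cons (b := m) s (.cons t w) =>
      ((s.arrowAtEnd ∧ t.arrowAtStart) ↔ m ∈ C) ∧ (Walk.cons t w).IsMConnecting C

end Walk

variable (G : MixedGraph V)

/-- `A` and `B` are m-separated given `C`: no m-connecting walk given `C`
between a vertex of `A` and a vertex of `B`. -/
def MSep (A B C : Set V) : Prop :=
  ∀ a ∈ A, ∀ b ∈ B, ∀ w : G.Walk a b, ¬ w.IsMConnecting C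

/-- `u` and `v` are joined by a pure-collider path (with at least one edge). -/
def ColliderConn (u v : V) : Prop :=
  ∃ w : G.Walk u v, 0 < w.length ∧ w.IsPureCollider

/-- Vertices connected to `S` by a (possibly empty) path of bi-directed edges. -/
def district (S : Set V) : Set V :=
  {v | ∃ s ∈ S, Relation.ReflTransGen G.bi s v}

/-- Children of vertices in `S`. -/
def ch (S : Set V) : Set V := {v | ∃ a ∈ S, G.dir a v}

/-- Ancestors of `S` (including `S` itself). -/
def an (S : Set V) : Set V :=
  {v | ∃ s ∈ S, Relation.ReflTransGen G.dir v s}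

/-- The subgraph induced by `W`: edges with both endpoints in `W`. -/
def induce (W : Set V) : MixedGraph V where
  dir a b := G.dir a b ∧ a ∈ W ∧ b ∈ W
  bi a b := G.bi a b ∧ a ∈ W ∧ b ∈ W
  bi_symm h := ⟨G.bi_symm h.1, h.2.2, h.2.1⟩

/-- Separation in an undirected graph with adjacency `adj`: every path between
`A` and `B` intersects `C`, i.e. `B` is not reachable from `A` avoiding `C`. -/
def UndirSep (adj : V → V → Prop) (A B C : Set V) : Prop :=
  ∀ a ∈ A, ∀ b ∈ B, ¬ Relation.ReflTransGen (fun x y => adj x y ∧ y ∉ C) a b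

inductive EdgeKind | fwd | bwd | bi
deriving DecidableEq

def Step.kind {G : MixedGraph V} : {a b : V} → G.Step a b → EdgeKind
  | _, _, .fwd _ => .fwd
  | _, _, .bwd _ => .bwd
  | _, _, .bi _ => .bi

def Walk.kinds {G : MixedGraph V} : {a b : V} → G.Walk a b → List EdgeKind
  | _, _, .nil => []
  | _, _, .cons s w => s.kind :: w.kinds

end MixedGraph

/-- Adjacency in the `C`-augmented, unoriented graph: `u` and `v` are joined by a
pure-collider path all of whose intermediate vertices lie in `C`
(single edges count, having no intermediate vertices). -/
def MixedGraph.augCAdj {V : Type*} (G : MixedGraph V) (C : Set V) (u v : V) : Prop :=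
  ∃ w : G.Walk u v, 0 < w.length ∧ w.IsPureCollider ∧ ∀ x ∈ w.interm, x ∈ C

namespace MixedGraph

variable {V : Type*} {H : MixedGraph V}

namespace Walk

theorem aux_verts_ne_nil : ∀ {a b : V} (w : H.Walk a b), w.verts ≠ []
  | _, _, .nil => by simp [verts]
  | _, _, .cons _ _ => by simp [verts]

theorem aux_end_mem_verts : ∀ {a b : V} (w : H.Walk a b), b ∈ w.verts
  | _, _, .nil => by simp [verts]
  | _, _, .cons _ w => by simpa [verts] using Or.inr (aux_end_mem_verts w)

theorem aux_interm_cons {a b c : V} (s : H.Step a b) (w : H.Walk b c) :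
    (Walk.cons s w).interm = w.verts.dropLast := rfl

theorem aux_dropLast_verts_cons {a b c : V} (s : H.Step a b) (w : H.Walk b c) :
    (Walk.cons s w).verts.dropLast = a :: w.verts.dropLast := by
  show (a :: w.verts).dropLast = _
  rw [List.dropLast_cons_of_ne_nil (aux_verts_ne_nil w)]

theorem aux_interm_cons_cons {a b c d : V} (s : H.Step a b) (t : H.Step b c)
    (w : H.Walk c d) :
    (Walk.cons s (Walk.cons t w)).interm = b :: (Walk.cons t w).interm := by
  rw [aux_interm_cons, aux_dropLast_verts_cons, aux_interm_cons]

theorem aux_interm_subset_verts {a b : V} (w : H.Walk a b) :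
    ∀ v ∈ w.interm, v ∈ w.verts := fun v hv =>
  (List.tail_sublist w.verts).subset (List.dropLast_sublist _ |>.subset hv)

theorem aux_dropLast_subset_verts {a b : V} (w : H.Walk a b) :
    ∀ v ∈ w.verts.dropLast, v ∈ w.verts := fun v hv =>
  (List.dropLast_sublist _).subset hv

/-- First edge of a walk has an arrowhead at the start. -/
def aux_startsArrow : {a b : V} → H.Walk a b → Prop
  | _, _, .nil => False
  | _, _, .cons s _ => s.arrowAtStart

/-- Last edge of a walk has an arrowhead at the end. -/
def aux_endsArrow : {a b : V} → H.Walk a b → Prop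
  | _, _, .nil => False
  | _, _, .cons s .nil => s.arrowAtEnd
  | _, _, .cons _ (.cons t w) => (Walk.cons t w).aux_endsArrow

theorem aux_endsArrow_cons_cons {a b c d : V} (s : H.Step a b) (t : H.Step b c)
    (w : H.Walk c d) :
    (Walk.cons s (Walk.cons t w)).aux_endsArrow = (Walk.cons t w).aux_endsArrow := rfl

theorem aux_append_mconn {C : Set V} :
    ∀ {a b c : V} (w₁ : H.Walk a b) (w₂ : H.Walk b c),
      w₁.IsMConnecting C → w₂.IsMConnecting C →
      (0 < w₁.length → 0 < w₂.length →
        ((w₁.aux_endsArrow ∧ w₂.aux_startsArrow) ↔ b ∈ C)) →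
      (w₁.append w₂).IsMConnecting C
  | _, _, _, .nil, w₂, _, h₂, _ => h₂
  | _, _, _, .cons s .nil, w₂, _, h₂, hj => by
      cases w₂ with
      | nil => trivial
      | cons t w =>
        exact ⟨hj (by simp [Walk.length]) (by simp [Walk.length]), h₂⟩
  | _, _, _, .cons s (.cons t w), w₂, h₁, h₂, hj =>
      ⟨h₁.1, aux_append_mconn (.cons t w) w₂ h₁.2 h₂
        (fun _ h2 => hj (by simp [Walk.length]) h2)⟩

theorem aux_pure_mconn {C : Set V} :
    ∀ {a b : V} (w : H.Walk a b), w.IsPureCollider →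
      (∀ v ∈ w.interm, v ∈ C) → w.IsMConnecting C
  | _, _, .nil, _, _ => trivial
  | _, _, .cons _ .nil, _, _ => trivial
  | _, _, .cons s (.cons t w), h, hC => by
      refine ⟨⟨fun _ => ?_, fun _ => ⟨h.1, h.2.1⟩⟩,
        aux_pure_mconn (.cons t w) h.2.2 fun v hv => hC v ?_⟩
      · exact hC _ (by rw [aux_interm_cons_cons]; exact List.mem_cons_self)
      · rw [aux_interm_cons_cons]; exact List.mem_cons_of_mem _ hv

/-- All edges of the walk are directed edges traversed forwards. -/
def aux_allFwd : {a b : V} → H.Walk a b → Prop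
  | _, _, .nil => True
  | _, _, .cons s w => s.kind = EdgeKind.fwd ∧ w.aux_allFwd

theorem aux_fwd_not_start {a b : V} {s : H.Step a b} (h : s.kind = EdgeKind.fwd) :
    ¬ s.arrowAtStart := by cases s <;> simp_all [Step.kind, Step.arrowAtStart]

theorem aux_fwd_end {a b : V} {s : H.Step a b} (h : s.kind = EdgeKind.fwd) :
    s.arrowAtEnd := by cases s <;> simp_all [Step.kind, Step.arrowAtEnd]

theorem aux_fwd_mconn {C : Set V} :
    ∀ {a b : V} (w : H.Walk a b), w.aux_allFwd →
      (∀ v ∈ w.interm, v ∉ C) → w.IsMConnecting C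
  | _, _, .nil, _, _ => trivial
  | _, _, .cons _ .nil, _, _ => trivial
  | _, _, .cons s (.cons t w), h, hC => by
      refine ⟨⟨fun hc => absurd hc.2 (aux_fwd_not_start h.2.1), fun hb => ?_⟩,
        aux_fwd_mconn (.cons t w) h.2 fun v hv => hC v ?_⟩
      · exact absurd hb (hC _ (by rw [aux_interm_cons_cons]; exact List.mem_cons_self))
      · rw [aux_interm_cons_cons]; exact List.mem_cons_of_mem _ hv

end Walk

/-- Reversal of a single edge traversal. -/
def Step.aux_symm : {a b : V} → H.Step a b → H.Step b a
  | _, _, .fwd h => .bwd h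
  | _, _, .bwd h => .fwd h
  | _, _, .bi h => .bi (H.bi_symm h)

theorem Step.aux_symm_not_end {a b : V} {s : H.Step a b} (h : s.kind = EdgeKind.fwd) :
    ¬ s.aux_symm.arrowAtEnd := by
  cases s <;> simp_all [Step.kind, Step.aux_symm, Step.arrowAtEnd]

theorem Step.aux_symm_start {a b : V} {s : H.Step a b} (h : s.kind = EdgeKind.fwd) :
    s.aux_symm.arrowAtStart := by
  cases s <;> simp_all [Step.kind, Step.aux_symm, Step.arrowAtStart]

namespace Walk

/-- `bounce D W` is the walk `D ++ reverse D ++ W` (go down `D`, come back, then `W`). -/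
def aux_bounce : {y c b : V} → H.Walk y c → H.Walk y b → H.Walk y b
  | _, _, _, .nil, W => W
  | _, _, _, .cons s D, W => .cons s (aux_bounce D (.cons s.aux_symm W))

/-- `climb D W` is the walk `reverse D ++ W`. -/
def aux_climb : {y s b : V} → H.Walk y s → H.Walk y b → H.Walk s b
  | _, _, _, .nil, W => W
  | _, _, _, .cons e D, W => aux_climb D (.cons e.aux_symm W)

theorem aux_bounce_mconn {C : Set V} :
    ∀ {y c b : V} (D : H.Walk y c) (W : H.Walk y b), D.aux_allFwd →
      (∀ v ∈ D.verts.dropLast, v ∉ C) → c ∈ C → W.IsMConnecting C →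
      (aux_bounce D W).IsMConnecting C
  | _, _, _, .nil, W, _, _, _, hW => hW
  | y, c, b, .cons s D, W, hfwd, hdl, hc, hW => by
      have hy : y ∉ C := hdl y (by rw [aux_dropLast_verts_cons]; exact List.mem_cons_self)
      have hW' : (Walk.cons s.aux_symm W).IsMConnecting C := by
        cases W with
        | nil => trivial
        | cons t W' =>
          exact ⟨⟨fun hcol => absurd hcol.1 (Step.aux_symm_not_end hfwd.1),
            fun hyc => absurd hyc hy⟩, hW⟩
      have ih := aux_bounce_mconn D (Walk.cons s.aux_symm W) hfwd.2
        (fun v hv => hdl v (by rw [aux_dropLast_verts_cons]; exact List.mem_cons_of_mem _ hv))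
        hc hW'
      show (Walk.cons s (aux_bounce D (Walk.cons s.aux_symm W))).IsMConnecting C
      cases D with
      | nil =>
        exact ⟨⟨fun _ => hc, fun _ => ⟨aux_fwd_end hfwd.1, Step.aux_symm_start hfwd.1⟩⟩, ih⟩
      | cons e D' =>
        have hm : _ ∉ C := hdl _ (by
          rw [aux_dropLast_verts_cons, aux_dropLast_verts_cons]
          exact List.mem_cons_of_mem _ (List.mem_cons_self))
        exact ⟨⟨fun hcol => absurd hcol.2 (aux_fwd_not_start hfwd.2.1),
          fun hmc => absurd hmc hm⟩, ih⟩

theorem aux_climb_mconn {C : Set V} :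
    ∀ {y s b : V} (D : H.Walk y s) (W : H.Walk y b), D.aux_allFwd →
      (∀ v ∈ D.verts.dropLast, v ∉ C) → W.IsMConnecting C →
      (aux_climb D W).IsMConnecting C
  | _, _, _, .nil, W, _, _, hW => hW
  | y, s, b, .cons e D, W, hfwd, hdl, hW => by
      have hy : y ∉ C := hdl y (by rw [aux_dropLast_verts_cons]; exact List.mem_cons_self)
      have hW' : (Walk.cons e.aux_symm W).IsMConnecting C := by
        cases W with
        | nil => trivial
        | cons t W' =>
          exact ⟨⟨fun hcol => absurd hcol.1 (Step.aux_symm_not_end hfwd.1),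
            fun hyc => absurd hyc hy⟩, hW⟩
      exact aux_climb_mconn D (Walk.cons e.aux_symm W) hfwd.2
        (fun v hv => hdl v (by rw [aux_dropLast_verts_cons]; exact List.mem_cons_of_mem _ hv))
        hW'

/-- Split an all-forward walk at its first vertex in `C`, if any. -/
theorem aux_split {C : Set V} :
    ∀ {y s : V} (D : H.Walk y s), D.aux_allFwd → y ∉ C →
      (∀ v ∈ D.verts, v ∉ C) ∨
        ∃ c ∈ C, ∃ D' : H.Walk y c, D'.aux_allFwd ∧ 0 < D'.length ∧
          ∀ v ∈ D'.interm, v ∉ C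
  | _, _, .nil, _, hy => Or.inl (by
      intro v hv
      rcases List.mem_singleton.mp hv with rfl
      exact hy)
  | y, s, .cons (b := m) e D, hfwd, hy => by
      by_cases hm : m ∈ C
      · exact Or.inr ⟨m, hm, .cons e .nil, ⟨hfwd.1, trivial⟩, by simp [Walk.length],
          by simp [interm, verts]⟩
      · rcases aux_split D hfwd.2 hm with h | ⟨c, hc, D', hf', hl', hi'⟩
        · refine Or.inl fun v hv => ?_
          rcases (by simpa [verts] using hv : v = y ∨ v ∈ D.verts) with rfl | hv
          · exact hy
          · exact h v hv
        · refine Or.inr ⟨c, hc, .cons e D', ⟨hfwd.1, hf'⟩, by simp [Walk.length], ?_⟩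
          intro v hv
          cases D' with
          | nil => simp [Walk.length] at hl'
          | cons t D'' =>
            rcases (by
              rw [aux_interm_cons_cons] at hv
              simpa using hv : v = m ∨ v ∈ (Walk.cons t D'').interm) with rfl | hv
            · exact hm
            · exact hi' v hv

end Walk

variable {G : MixedGraph V}

theorem aux_step_mem {M : Set V} {a b : V} (s : (G.induce M).Step a b) :
    a ∈ M ∧ b ∈ M := by
  cases s with
  | fwd h => exact ⟨h.2.1, h.2.2⟩
  | bwd h => exact ⟨h.2.2, h.2.1⟩
  | bi h => exact ⟨h.2.1, h.2.2⟩

theorem aux_end_mem {M : Set V} :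
    ∀ {a b : V} (w : (G.induce M).Walk a b), 0 < w.length → b ∈ M
  | _, _, .nil, h => by simp [Walk.length] at h
  | _, _, .cons s .nil, _ => (aux_step_mem s).2
  | _, _, .cons s (.cons t w), _ => aux_end_mem (.cons t w) (by simp [Walk.length])

theorem aux_dirWalk {S M : Set V} (hM : M = G.an S) {s : V} (hs : s ∈ S) :
    ∀ {y : V}, Relation.ReflTransGen G.dir y s →
      ∃ D : (G.induce M).Walk y s, D.aux_allFwd := by
  intro y h
  induction h using Relation.ReflTransGen.head_induction_on with
  | refl => exact ⟨.nil, trivial⟩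
  | @head u v hd htl ih =>
    obtain ⟨D, hD⟩ := ih
    have hu : u ∈ M := hM ▸ ⟨s, hs, Relation.ReflTransGen.head hd htl⟩
    have hv : v ∈ M := hM ▸ ⟨s, hs, htl⟩
    exact ⟨.cons (.fwd ⟨hd, hu, hv⟩) D, ⟨rfl, hD⟩⟩

end MixedGraph

namespace MixedGraph.Walk

variable {V : Type*} {H : MixedGraph V}

/-- Peel the first maximal collider segment from an m-connecting walk. -/
theorem aux_firstSeg {C : Set V} :
    ∀ {x m y : V} (s : H.Step x m) (w' : H.Walk m y),
      (Walk.cons s w').IsMConnecting C → y ∉ C →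
      ∃ z, z ∉ C ∧ ∃ P : H.Walk m z,
        (Walk.cons s P).IsPureCollider ∧ (∀ v ∈ (Walk.cons s P).interm, v ∈ C) ∧
        ∃ w₂ : H.Walk z y, w₂.IsMConnecting C ∧ w₂.length < (Walk.cons s w').length
  | x, m, _, s, .nil, _, hy =>
      ⟨m, hy, .nil, trivial, by simp [interm, verts], .nil, trivial, by simp [Walk.length]⟩
  | x, m, y, s, .cons t w'', h, hy => by
      by_cases hm : m ∈ C
      · obtain ⟨hs, ht⟩ := h.1.mpr hm
        obtain ⟨z, hz, P', hpure, hPC, w₂, hw₂, hlen⟩ := aux_firstSeg t w'' h.2 hy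
        refine ⟨z, hz, .cons t P', ⟨hs, ht, hpure⟩, ?_, w₂, hw₂,
          hlen.trans (by simp [Walk.length])⟩
        intro v hv
        rcases (by
          rw [aux_interm_cons_cons] at hv
          simpa using hv : v = m ∨ v ∈ (Walk.cons t P').interm) with rfl | hv
        · exact hm
        · exact hPC v hv
      · exact ⟨m, hm, .nil, trivial, by simp [interm, verts], .cons t w'', h.2,
          by simp [Walk.length]⟩

/-- An m-connecting walk yields a chain of augmented edges avoiding `C`. -/
theorem aux_L1 {C : Set V} :
    ∀ (n : ℕ) {x y : V} (w : H.Walk x y), w.length ≤ n → w.IsMConnecting C → y ∉ C →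
      Relation.ReflTransGen (fun u v => H.augCAdj C u v ∧ v ∉ C) x y
  | 0, _, _, .nil, _, _, _ => Relation.ReflTransGen.refl
  | 0, _, _, .cons _ _, hn, _, _ => by simp [Walk.length] at hn
  | n + 1, _, _, .nil, _, _, _ => Relation.ReflTransGen.refl
  | n + 1, x, y, .cons s w', hn, hmc, hy => by
      obtain ⟨z, hz, P, hpure, hPC, w₂, hw₂, hlen⟩ := aux_firstSeg s w' hmc hy
      have haug : H.augCAdj C x z :=
        ⟨.cons s P, by simp [Walk.length], hpure, hPC⟩
      refine Relation.ReflTransGen.head ⟨haug, hz⟩ ?_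
      exact aux_L1 n w₂ (by omega) hw₂ hy

end MixedGraph.Walk

/-- With `M = an(A∪B∪C)`, `G_M` the induced subgraph, `A*` the vertices of `M \ (B∪C)`
connected to `A` in the `C`-augmented unoriented graph by a path avoiding `C`, and
`B* = M \ (C ∪ A*)`: `A ⊥_m B | C` in `G_M` iff `A* ⊥_m B* | C` in `G_M`. -/
theorem stmt_9 {V : Type*} (G : MixedGraph V) (A B C : Set V)
    (hAB : Disjoint A B) (hAC : Disjoint A C) (hBC : Disjoint B C)
    (M : Set V) (hM : M = G.an (A ∪ B ∪ C))
    (Astar : Set V)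
    (hAstar : Astar = {v | v ∈ M ∧ v ∉ B ∧ v ∉ C ∧
      ∃ a ∈ A, Relation.ReflTransGen
        (fun x y => (G.induce M).augCAdj C x y ∧ y ∉ C) a v})
    (Bstar : Set V) (hBstar : Bstar = M \ (C ∪ Astar)) :
    (G.induce M).MSep A B C ↔ (G.induce M).MSep Astar Bstar C := by
  constructor
  · intro hsep
    have key : ∀ a ∈ A, ∀ y,
        Relation.ReflTransGen (fun x y => (G.induce M).augCAdj C x y ∧ y ∉ C) a y →
        ∀ b ∈ B, ∀ W : (G.induce M).Walk y b, W.IsMConnecting C → False := by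
      intro a ha y hy
      induction hy with
      | refl => intro b hb W hW; exact hsep a ha b hb W hW
      | @tail y' y h' hstep ih =>
        intro b hb W hW
        obtain ⟨⟨Pw, hPlen, hPpure, hPint⟩, hyC⟩ := hstep
        have hPm := MixedGraph.Walk.aux_pure_mconn Pw hPpure hPint
        have hyM : y ∈ M := MixedGraph.aux_end_mem Pw hPlen
        rw [hM] at hyM
        obtain ⟨s, hsU, hdir⟩ := hyM
        obtain ⟨D, hDfwd⟩ := MixedGraph.aux_dirWalk hM hsU hdir
        rcases MixedGraph.Walk.aux_split D hDfwd hyC with hall | ⟨c, hc, D', hf', hl', hi'⟩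
        · have hsC : s ∉ C := hall s (MixedGraph.Walk.aux_end_mem_verts D)
          have hdl : ∀ v ∈ D.verts.dropLast, v ∉ C := fun v hv =>
            hall v (MixedGraph.Walk.aux_dropLast_subset_verts D v hv)
          rcases hsU with (hsA | hsB) | hsC'
          · exact hsep s hsA b hb _
              (MixedGraph.Walk.aux_climb_mconn D W hDfwd hdl hW)
          · have hDm : D.IsMConnecting C := MixedGraph.Walk.aux_fwd_mconn D hDfwd
              (fun v hv => hall v (MixedGraph.Walk.aux_interm_subset_verts D v hv))
            refine ih s hsB (Pw.append D)
              (MixedGraph.Walk.aux_append_mconn Pw D hPm hDm ?_)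
            intro _ hD2
            constructor
            · intro hh
              cases D with
              | nil => simp [MixedGraph.Walk.length] at hD2
              | cons e D'' =>
                exact absurd hh.2 (MixedGraph.Walk.aux_fwd_not_start hDfwd.1)
            · intro hyc; exact absurd hyc hyC
          · exact absurd hsC' hsC
        · have hdl' : ∀ v ∈ D'.verts.dropLast, v ∉ C := by
            cases D' with
            | nil => simp [MixedGraph.Walk.length] at hl'
            | cons e D'' =>
              intro v hv
              rw [MixedGraph.Walk.aux_dropLast_verts_cons] at hv
              rcases List.mem_cons.mp hv with rfl | hv
              · exact hyC
              · exact hi' v hv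
          have hbm := MixedGraph.Walk.aux_bounce_mconn D' W hf' hdl' hc hW
          refine ih b hb (Pw.append (MixedGraph.Walk.aux_bounce D' W))
            (MixedGraph.Walk.aux_append_mconn Pw _ hPm hbm ?_)
          intro _ _
          constructor
          · intro hh
            cases D' with
            | nil => simp [MixedGraph.Walk.length] at hl'
            | cons e D'' =>
              exact absurd hh.2 (MixedGraph.Walk.aux_fwd_not_start hf'.1)
          · intro hyc; exact absurd hyc hyC
    intro a hastar b hbstar W hW
    rw [hAstar] at hastar
    obtain ⟨haM, haB, haC, a0, ha0, hrtg⟩ := hastar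
    rw [hBstar] at hbstar
    obtain ⟨hbM, hbn⟩ := hbstar
    have hbC : b ∉ C := fun h => hbn (Set.mem_union_left _ h)
    have hrtg2 := MixedGraph.Walk.aux_L1 W.length W le_rfl hW hbC
    by_cases hbB : b ∈ B
    · exact key a0 ha0 _ hrtg b hbB W hW
    · refine hbn (Set.mem_union_right _ ?_)
      rw [hAstar]
      exact ⟨hbM, hbB, hbC, a0, ha0, hrtg.trans hrtg2⟩
  · intro hsep a ha b hb W hW
    have haA : a ∈ Astar := by
      rw [hAstar]
      exact ⟨hM ▸ ⟨a, Set.mem_union_left _ (Set.mem_union_left _ ha),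
          Relation.ReflTransGen.refl⟩,
        Set.disjoint_left.mp hAB ha, Set.disjoint_left.mp hAC ha,
        a, ha, Relation.ReflTransGen.refl⟩
    have hbB : b ∈ Bstar := by
      rw [hBstar]
      refine ⟨hM ▸ ⟨b, Set.mem_union_left _ (Set.mem_union_right _ hb),
          Relation.ReflTransGen.refl⟩, ?_⟩
      intro h
      rcases h with h | h
      · exact Set.disjoint_left.mp hBC hb h
      · rw [hAstar] at h
        exact h.2.1 hb
    exact hsep a haA b hbB W hW
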